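/- arXiv:2305.01387 — 3 statements merged into one kernel-verified Lean document; each statement's English description precedes it below -/
import Mathlib

section
/- Let μ and ν be probability measures on a measurable space such that for every measurable set O one has μ(O) ≤ e^ε · ν(O) and ν(O) ≤ e^ε · μ(O), where ε ≥ 0. Then μ is absolutely continuous with respect to ν and for every real α > 1 the α-Rényi divergence satisfies D_α(μ‖ν) ≤ (ε²/2) · α. (In DP language: an ε-differentially private mechanism satisfies (ε²/2)-zero-concentrated differential privacy.) -/
open MeasureTheory
open scoped ENNReal NNReal

section aux

lemma aux_sinh_le (t : ℝ) (ht : 0 ≤ t) : Real.sinh t ≤ t * Real.cosh t := by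
  have hmono : MonotoneOn (fun t : ℝ => t * Real.cosh t - Real.sinh t) (Set.Ici 0) := by
    apply monotoneOn_of_deriv_nonneg (convex_Ici 0)
    · fun_prop
    · intro x hx
      exact (((differentiable_id.mul Real.differentiable_cosh).sub
        Real.differentiable_sinh) x).differentiableWithinAt
    · intro x hx
      have hd : HasDerivAt (fun t : ℝ => t * Real.cosh t - Real.sinh t)
          ((1 * Real.cosh x + x * Real.sinh x) - Real.cosh x) x :=
        ((hasDerivAt_id x).mul (Real.hasDerivAt_cosh x)).sub (Real.hasDerivAt_sinh x)
      rw [hd.deriv]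
      have : 0 ≤ x := le_of_lt (by simpa using hx)
      nlinarith [Real.sinh_nonneg_iff.2 this]
  have := hmono (Set.self_mem_Ici) (by exact ht : t ∈ Set.Ici 0) ht
  simpa using this

lemma aux_cosh_ratio {u v : ℝ} (hv : 0 ≤ v) (huv : v ≤ u) :
    Real.cosh u ≤ Real.cosh v * Real.exp (u ^ 2 / 2 - v ^ 2 / 2) := by
  have hdiff : ∀ x : ℝ, HasDerivAt (fun t : ℝ => Real.log (Real.cosh t) - t ^ 2 / 2)
      (Real.sinh x / Real.cosh x - (2 * x ^ 1) / 2) x := fun x =>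
    ((Real.hasDerivAt_cosh x).log (Real.cosh_pos x).ne').sub
      ((hasDerivAt_pow 2 x).div_const 2)
  have hanti : AntitoneOn (fun t : ℝ => Real.log (Real.cosh t) - t ^ 2 / 2) (Set.Ici 0) := by
    apply antitoneOn_of_deriv_nonpos (convex_Ici 0)
    · apply ContinuousOn.sub
      · exact (Real.continuous_cosh.continuousOn).log (fun x _ => (Real.cosh_pos x).ne')
      · fun_prop
    · exact fun x _ => (hdiff x).differentiableAt.differentiableWithinAt
    · intro x hx
      have hx0 : 0 ≤ x := le_of_lt (by simpa using hx)
      rw [(hdiff x).deriv]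
      have h1 : Real.sinh x / Real.cosh x ≤ x :=
        (div_le_iff₀ (Real.cosh_pos x)).2 (aux_sinh_le x hx0)
      simp only [pow_one]
      linarith
  have h := hanti (by exact hv : v ∈ Set.Ici 0) (le_trans hv huv) huv
  have hcu := Real.cosh_pos u
  have hcv := Real.cosh_pos v
  calc Real.cosh u = Real.exp (Real.log (Real.cosh u)) := (Real.exp_log hcu).symm
    _ ≤ Real.exp (Real.log (Real.cosh v) + (u ^ 2 / 2 - v ^ 2 / 2)) := by
        apply Real.exp_le_exp.2; dsimp at h; linarith
    _ = Real.cosh v * Real.exp (u ^ 2 / 2 - v ^ 2 / 2) := by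
        rw [Real.exp_add, Real.exp_log hcv]

lemma aux_key {ε p : ℝ} (hε : 0 < ε) (hp : 1 < p) :
    ((Real.exp ε - 1) * Real.exp (-(ε * p)) + (1 - Real.exp (-ε)) * Real.exp (ε * p)) /
      (Real.exp ε - Real.exp (-ε)) ≤ Real.exp (ε ^ 2 * p * (p - 1) / 2) := by
  have ha : 0 < Real.exp (ε / 2) := Real.exp_pos _
  have hb : 0 < Real.exp (ε * p) := Real.exp_pos _
  have e1 : Real.exp ε = Real.exp (ε / 2) * Real.exp (ε / 2) := by
    rw [← Real.exp_add]; ring_nf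
  have e2 : Real.exp (-ε) = (Real.exp (ε / 2) * Real.exp (ε / 2))⁻¹ := by
    rw [Real.exp_neg, e1]
  have e3 : Real.exp (-(ε * p)) = (Real.exp (ε * p))⁻¹ := by rw [Real.exp_neg]
  have e4 : Real.exp (ε * p - ε / 2) = Real.exp (ε * p) / Real.exp (ε / 2) := by
    rw [Real.exp_sub]
  have e5 : Real.exp (-(ε * p - ε / 2)) = Real.exp (ε / 2) / Real.exp (ε * p) := by
    rw [Real.exp_neg, e4, inv_div]
  have e6 : Real.exp (-(ε / 2)) = (Real.exp (ε / 2))⁻¹ := by rw [Real.exp_neg]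
  have ha1 : 1 < Real.exp (ε / 2) * Real.exp (ε / 2) := by
    rw [← e1, ← Real.exp_zero]; exact Real.exp_lt_exp.2 hε
  have identity :
      ((Real.exp ε - 1) * Real.exp (-(ε * p)) + (1 - Real.exp (-ε)) * Real.exp (ε * p)) /
        (Real.exp ε - Real.exp (-ε))
      = Real.cosh (ε * p - ε / 2) / Real.cosh (ε / 2) := by
    rw [Real.cosh_eq, Real.cosh_eq, e1, e2, e3, e4, e5, e6]
    generalize Real.exp (ε / 2) = a at ha ha1 ⊢
    generalize Real.exp (ε * p) = b at hb ⊢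
    have hden : a * a - (a * a)⁻¹ ≠ 0 := by
      have h2 : (a * a)⁻¹ < a * a := by
        calc (a*a)⁻¹ < 1 := by rw [inv_lt_one_iff₀]; right; exact ha1
          _ < a * a := ha1
      linarith
    have hD2 : (a + a⁻¹) / 2 ≠ 0 := by positivity
    rw [div_eq_div_iff hden hD2]
    field_simp
    ring
  rw [identity]
  have hv : (0:ℝ) ≤ ε / 2 := by linarith
  have huv : ε / 2 ≤ ε * p - ε / 2 := by nlinarith
  have h := aux_cosh_ratio hv huv
  have hcv := Real.cosh_pos (ε / 2)
  have hfin : Real.cosh (ε * p - ε / 2) / Real.cosh (ε / 2)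
      ≤ Real.exp ((ε * p - ε / 2) ^ 2 / 2 - (ε / 2) ^ 2 / 2) := by
    rw [div_le_iff₀ hcv]
    linarith [h, mul_comm (Real.cosh (ε/2)) (Real.exp ((ε * p - ε / 2) ^ 2 / 2 - (ε / 2) ^ 2 / 2))]
  convert hfin using 2
  ring

lemma aux_chord {A B t p : ℝ} (hA : 0 < A) (hAB : A < B) (htA : A ≤ t) (htB : t ≤ B)
    (hp : 1 ≤ p) :
    t ^ p ≤ ((B - t) * A ^ p + (t - A) * B ^ p) / (B - A) := by
  have hd : (0:ℝ) < B - A := by linarith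
  have hs0 : 0 ≤ (t - A) / (B - A) := by apply div_nonneg <;> linarith
  have hs1 : 0 ≤ (B - t) / (B - A) := by apply div_nonneg <;> linarith
  have hsum : (B - t) / (B - A) + (t - A) / (B - A) = 1 := by
    field_simp
    ring
  have hcomb : ((B - t) / (B - A)) • A + ((t - A) / (B - A)) • B = t := by
    simp only [smul_eq_mul]
    field_simp
    ring
  have h := (convexOn_rpow hp).2 (le_of_lt hA : A ∈ Set.Ici 0)
    (le_of_lt (hA.trans hAB) : B ∈ Set.Ici (0:ℝ)) hs1 hs0 hsum
  rw [hcomb] at h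
  refine h.trans (le_of_eq ?_)
  simp only [smul_eq_mul]
  field_simp

end aux

/-- The `α`-Rényi divergence `D_α(μ‖ν) = (1/(α−1)) · log ∫ (dμ/dν)^α dν`. -/
noncomputable def renyiDiv {X : Type*} [MeasurableSpace X]
    (μ ν : Measure X) (α : ℝ) : ℝ :=
  (α - 1)⁻¹ * Real.log (∫ x, (μ.rnDeriv ν x).toReal ^ α ∂ν)

/-- If `μ` and `ν` satisfy the two-sided `ε`-DP inequality, then `μ ≪ ν` and
`D_α(μ‖ν) ≤ (ε²/2)·α` for all `α > 1` (i.e. `ε`-DP implies `(ε²/2)`-zCDP). -/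
theorem dp_implies_zcdp {X : Type*} [MeasurableSpace X]
    (μ ν : Measure X) [IsProbabilityMeasure μ] [IsProbabilityMeasure ν]
    (ε : ℝ) (hε : 0 ≤ ε)
    (h1 : ∀ O : Set X, MeasurableSet O → μ O ≤ ENNReal.ofReal (Real.exp ε) * ν O)
    (h2 : ∀ O : Set X, MeasurableSet O → ν O ≤ ENNReal.ofReal (Real.exp ε) * μ O) :
    μ ≪ ν ∧ ∀ α : ℝ, 1 < α → renyiDiv μ ν α ≤ ε ^ 2 / 2 * α := by
  have hac : μ ≪ ν := by
    refine Measure.AbsolutelyContinuous.mk fun s hs hνs => ?_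
    have := h1 s hs
    rw [hνs, mul_zero] at this
    exact le_antisymm this (by simp)
  have hca : ν ≪ μ := by
    refine Measure.AbsolutelyContinuous.mk fun s hs hμs => ?_
    have := h2 s hs
    rw [hμs, mul_zero] at this
    exact le_antisymm this (by simp)
  refine ⟨hac, fun α hα => ?_⟩
  set c : ℝ≥0∞ := ENNReal.ofReal (Real.exp ε) with hc_def
  have hc0 : c ≠ 0 := by
    simp only [hc_def, ne_eq, ENNReal.ofReal_eq_zero, not_le]
    exact Real.exp_pos ε
  have hct : c ≠ ⊤ := ENNReal.ofReal_ne_top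
  have hfin1 : IsFiniteMeasure (c • ν) := by
    refine ⟨?_⟩
    rw [Measure.smul_apply, smul_eq_mul, measure_univ, mul_one]
    exact hct.lt_top
  have hfin2 : IsFiniteMeasure (c • μ) := by
    refine ⟨?_⟩
    rw [Measure.smul_apply, smul_eq_mul, measure_univ, mul_one]
    exact hct.lt_top
  -- upper bound on the RN derivative
  have hub : ∀ᵐ x ∂ν, μ.rnDeriv ν x ≤ c := by
    have hle : μ ≤ c • ν := by
      refine Measure.le_iff.2 fun s hs => ?_
      rw [Measure.smul_apply, smul_eq_mul]
      exact h1 s hs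
    have hone := Measure.rnDeriv_le_one_of_le hle
    have hone' : μ.rnDeriv (c • ν) ≤ᵐ[ν] 1 :=
      (Measure.absolutelyContinuous_smul hc0).ae_le hone
    have hsm := Measure.rnDeriv_smul_right_of_ne_top μ ν hc0 hct
    filter_upwards [hone', hsm] with x hx1 hx2
    rw [hx2] at hx1
    simp only [Pi.smul_apply, smul_eq_mul, Pi.one_apply] at hx1
    have := mul_le_mul_right hx1 c
    rwa [← mul_assoc, ENNReal.mul_inv_cancel hc0 hct, one_mul, mul_one] at this
  -- lower bound on the RN derivative
  have hlbμ : ∀ᵐ x ∂μ, c⁻¹ ≤ μ.rnDeriv ν x := by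
    have hle : ν ≤ c • μ := by
      refine Measure.le_iff.2 fun s hs => ?_
      rw [Measure.smul_apply, smul_eq_mul]
      exact h2 s hs
    have hone := Measure.rnDeriv_le_one_of_le hle
    have hone' : ν.rnDeriv (c • μ) ≤ᵐ[μ] 1 :=
      (Measure.absolutelyContinuous_smul hc0).ae_le hone
    have hsm := Measure.rnDeriv_smul_right_of_ne_top ν μ hc0 hct
    have hinv := Measure.inv_rnDeriv hac
    filter_upwards [hone', hsm, hinv] with x hx1 hx2 hx3
    rw [hx2] at hx1
    simp only [Pi.smul_apply, smul_eq_mul, Pi.one_apply] at hx1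
    have hb : ν.rnDeriv μ x ≤ c := by
      have := mul_le_mul_right hx1 c
      rwa [← mul_assoc, ENNReal.mul_inv_cancel hc0 hct, one_mul, mul_one] at this
    rw [← hx3] at hb
    simp only [Pi.inv_apply] at hb
    have := ENNReal.inv_le_inv' hb
    rwa [inv_inv] at this
  have hlb : ∀ᵐ x ∂ν, c⁻¹ ≤ μ.rnDeriv ν x := hca.ae_le hlbμ
  have hcinv : c⁻¹ = ENNReal.ofReal (Real.exp (-ε)) := by
    rw [hc_def, Real.exp_neg, ENNReal.ofReal_inv_of_pos (Real.exp_pos ε)]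
  -- real-valued bounds
  set g : X → ℝ := fun x => (μ.rnDeriv ν x).toReal with hg_def
  have h_lt_top : ∀ᵐ x ∂ν, μ.rnDeriv ν x < ⊤ := Measure.rnDeriv_lt_top μ ν
  have hgub : ∀ᵐ x ∂ν, g x ≤ Real.exp ε := by
    filter_upwards [hub] with x hx
    exact ENNReal.toReal_le_of_le_ofReal (Real.exp_pos ε).le hx
  have hglb : ∀ᵐ x ∂ν, Real.exp (-ε) ≤ g x := by
    filter_upwards [hlb, h_lt_top] with x hx hxt
    rw [hcinv] at hx
    exact (ENNReal.ofReal_le_iff_le_toReal hxt.ne).1 hx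
  have hg0 : ∀ x, 0 ≤ g x := fun x => ENNReal.toReal_nonneg
  have hint : ∫ x, g x ∂ν = 1 := by
    rw [hg_def, Measure.integral_toReal_rnDeriv hac, probReal_univ]
  have hg_meas : Measurable g := (Measure.measurable_rnDeriv μ ν).ennreal_toReal
  have hg_int : Integrable g ν := Measure.integrable_toReal_rnDeriv
  have hgp_meas : AEStronglyMeasurable (fun x => g x ^ α) ν :=
    (hg_meas.pow measurable_const).aestronglyMeasurable
  have hgp_int : Integrable (fun x => g x ^ α) ν := by
    refine Integrable.mono' (integrable_const (Real.exp ε ^ α)) hgp_meas ?_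
    filter_upwards [hgub] with x hx
    rw [Real.norm_eq_abs, abs_of_nonneg (Real.rpow_nonneg (hg0 x) α)]
    exact Real.rpow_le_rpow (hg0 x) hx (by linarith)
  rcases hε.eq_or_lt with hε0 | hεpos
  · -- ε = 0
    subst hε0
    have heq : g =ᵐ[ν] fun _ => 1 := by
      filter_upwards [hgub, hglb] with x hx1 hx2
      simp only [Real.exp_zero] at hx1
      simp only [neg_zero, Real.exp_zero] at hx2
      exact le_antisymm hx1 hx2
    have hIeq : ∫ x, g x ^ α ∂ν = 1 := by
      rw [integral_congr_ae (heq.mono fun x hx => by rw [hx, Real.one_rpow])]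
      simp
    rw [renyiDiv]
    rw [show (fun x => (μ.rnDeriv ν x).toReal ^ α) = fun x => g x ^ α from rfl] at *
    rw [hIeq, Real.log_one, mul_zero]
    norm_num
  · -- ε > 0
    set A : ℝ := Real.exp (-ε) with hA_def
    set B : ℝ := Real.exp ε with hB_def
    have hA : 0 < A := Real.exp_pos _
    have hABlt : A < B := Real.exp_lt_exp.2 (by linarith)
    have hBA : (0:ℝ) < B - A := by linarith
    set c₀ : ℝ := (B * A ^ α - A * B ^ α) / (B - A) with hc0_def
    set c₁ : ℝ := (B ^ α - A ^ α) / (B - A) with hc1_def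
    have hbound : ∀ᵐ x ∂ν, g x ^ α ≤ c₀ + c₁ * g x := by
      filter_upwards [hgub, hglb] with x hx1 hx2
      have h := aux_chord hA hABlt hx2 hx1 (le_of_lt hα)
      refine h.trans (le_of_eq ?_)
      rw [hc0_def, hc1_def]
      field_simp
      try ring
    have hI : ∫ x, g x ^ α ∂ν ≤ c₀ + c₁ := by
      have h1' : ∫ x, g x ^ α ∂ν ≤ ∫ x, c₀ + c₁ * g x ∂ν :=
        integral_mono_ae hgp_int ((integrable_const c₀).add (hg_int.const_mul c₁)) hbound
      rwa [integral_add (integrable_const c₀) (hg_int.const_mul c₁),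
        integral_const, integral_const_mul, hint, probReal_univ,
        one_smul, mul_one] at h1'
    have hval : c₀ + c₁ ≤ Real.exp (ε ^ 2 * α * (α - 1) / 2) := by
      have haux := aux_key hεpos hα
      have eB : Real.exp (ε * α) = B ^ α := Real.exp_mul ε α
      have eA : Real.exp (-(ε * α)) = A ^ α := by
        rw [show -(ε * α) = (-ε) * α by ring, Real.exp_mul]
      rw [eA, eB, ← hA_def, ← hB_def] at haux
      refine le_trans (le_of_eq ?_) haux
      rw [hc0_def, hc1_def]
      field_simp
      try ring
    have hIpos : 0 < ∫ x, g x ^ α ∂ν := by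
      have hlow : ∫ x, (A : ℝ) ^ α ∂ν ≤ ∫ x, g x ^ α ∂ν := by
        refine integral_mono_ae (integrable_const _) hgp_int ?_
        filter_upwards [hglb] with x hx
        exact Real.rpow_le_rpow hA.le hx (by linarith)
      rw [integral_const, probReal_univ, one_smul] at hlow
      exact lt_of_lt_of_le (Real.rpow_pos_of_pos hA α) hlow
    have hα1 : (0:ℝ) < α - 1 := by linarith
    have hlog : Real.log (∫ x, g x ^ α ∂ν) ≤ ε ^ 2 * α * (α - 1) / 2 := by
      have := Real.log_le_log hIpos (hI.trans hval)
      rwa [Real.log_exp] at this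
    rw [renyiDiv]
    calc (α - 1)⁻¹ * Real.log (∫ x, (μ.rnDeriv ν x).toReal ^ α ∂ν)
        ≤ (α - 1)⁻¹ * (ε ^ 2 * α * (α - 1) / 2) := by
          exact mul_le_mul_of_nonneg_left hlog (by positivity)
      _ = ε ^ 2 / 2 * α := by field_simp
end

section
/- Let μ and ν be probability measures on a measurable space such that for every measurable set O one has μ(O) ≤ e^ε · ν(O) and ν(O) ≤ e^ε · μ(O), where ε ≥ 0. Then the Kullback–Leibler divergence satisfies KL(μ‖ν) = ∫ log(dμ/dν) dμ ≤ ε²/2. -/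
open MeasureTheory

noncomputable def dpB (ε : ℝ) : ℝ := -2*ε/(Real.exp ε - Real.exp (-ε))
noncomputable def dpA (ε : ℝ) : ℝ := ε - dpB ε * Real.exp (-ε)

lemma dpB_nonpos (ε : ℝ) (hε : 0 ≤ ε) : dpB ε ≤ 0 := by
  apply div_nonpos_of_nonpos_of_nonneg
  · linarith
  · have : Real.exp (-ε) ≤ Real.exp ε := Real.exp_le_exp.mpr (by linarith)
    linarith

lemma exp_ineq (ε : ℝ) (hε : 0 ≤ ε) : 2*(Real.exp ε - 1) ≤ ε * (Real.exp ε + 1) := by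
  set f : ℝ → ℝ := fun x => x * (Real.exp x + 1) - 2*(Real.exp x - 1) with hf
  have hd : ∀ x : ℝ, HasDerivAt f (1 + (x-1)*Real.exp x) x := by
    intro x
    have h1 : HasDerivAt (fun x : ℝ => x * (Real.exp x + 1))
        (1 * (Real.exp x + 1) + x * Real.exp x) x :=
      (hasDerivAt_id x).mul ((Real.hasDerivAt_exp x).add_const 1)
    have h2 : HasDerivAt (fun x : ℝ => 2*(Real.exp x - 1)) (2 * Real.exp x) x :=
      ((Real.hasDerivAt_exp x).sub_const 1).const_mul 2
    have := h1.sub h2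
    exact this.congr_deriv (by ring)
  have hmono : MonotoneOn f (Set.Ici (0:ℝ)) := by
    apply monotoneOn_of_deriv_nonneg (convex_Ici 0)
    · exact (Continuous.continuousOn (by continuity))
    · intro x _
      exact (hd x).differentiableAt.differentiableWithinAt
    · intro x hx
      rw [interior_Ici] at hx
      rw [(hd x).deriv]
      have hx0 : (0:ℝ) < x := hx
      have h3 : (1 - x) * Real.exp x ≤ 1 := by
        have h4 := mul_le_mul_of_nonneg_right (Real.add_one_le_exp (-x)) (Real.exp_pos x).le
        rw [← Real.exp_add] at h4
        simp at h4
        linarith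
      nlinarith
  have h0 : f 0 ≤ f ε := hmono (Set.self_mem_Ici) hε hε
  simp [hf, Real.exp_zero] at h0
  linarith

lemma dpAB_le (ε : ℝ) (hε : 0 ≤ ε) : dpA ε + dpB ε ≤ ε^2/2 := by
  rcases eq_or_lt_of_le hε with h | h
  · simp [dpA, dpB, ← h]
  · have hE1 : 1 < Real.exp ε := Real.one_lt_exp_iff.mpr h
    have hE0 : (0:ℝ) < Real.exp ε := Real.exp_pos ε
    have hF0 : (0:ℝ) < Real.exp (-ε) := Real.exp_pos _
    have hEF : Real.exp ε * Real.exp (-ε) = 1 := by rw [← Real.exp_add]; simp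
    have hd : 0 < Real.exp ε - Real.exp (-ε) := by
      have : Real.exp (-ε) < 1 := by nlinarith
      linarith
    have hkey := exp_ineq ε hε
    unfold dpA dpB
    have key2 : ε - -2*ε/(Real.exp ε - Real.exp (-ε)) * Real.exp (-ε) +
        -2*ε/(Real.exp ε - Real.exp (-ε)) =
        ε + (-2*ε + 2*ε*Real.exp (-ε))/(Real.exp ε - Real.exp (-ε)) := by ring
    rw [key2, ← sub_nonneg]
    have h5 : ε^2/2 - (ε + (-2*ε + 2*ε*Real.exp (-ε))/(Real.exp ε - Real.exp (-ε))) =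
        ((ε^2/2 - ε)*(Real.exp ε - Real.exp (-ε)) - (-2*ε + 2*ε*Real.exp (-ε)))/
          (Real.exp ε - Real.exp (-ε)) := by
      field_simp
      ring
    rw [h5]
    apply div_nonneg _ hd.le
    have h4 : 0 ≤ ε * (Real.exp ε - 1) * (ε*(Real.exp ε + 1) - 2*(Real.exp ε - 1)) :=
      mul_nonneg (mul_nonneg hε (by linarith)) (by linarith)
    rw [← mul_nonneg_iff_of_pos_right hE0]
    nlinarith [hEF, h4, hE0, hF0]

theorem key_pt (ε y : ℝ) (hy1 : -ε ≤ y) (hy2 : y ≤ ε) :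
    y ≤ dpA ε + dpB ε * Real.exp (-y) := by
  have hε : 0 ≤ ε := by linarith
  rcases eq_or_lt_of_le hε with h | h
  · have hy : y = 0 := le_antisymm (h ▸ hy2) (by rw [← h] at hy1; linarith)
    simp [dpA, dpB, ← h, hy]
  · have hE0 : (0:ℝ) < Real.exp ε := Real.exp_pos ε
    have hE1 : 1 < Real.exp ε := Real.one_lt_exp_iff.mpr h
    have hd : 0 < Real.exp ε - Real.exp (-ε) := by
      rw [Real.exp_neg]
      have : (Real.exp ε)⁻¹ < 1 := inv_lt_one_of_one_lt₀ hE1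
      linarith
    set lam : ℝ := (ε - y)/(2*ε) with hlam
    have hl0 : 0 ≤ lam := div_nonneg (by linarith) (by linarith)
    have hl1 : 0 ≤ 1 - lam := by
      rw [hlam]
      rw [sub_nonneg, div_le_one (by linarith)]
      linarith
    have hconv := convexOn_exp.2 (Set.mem_univ ε) (Set.mem_univ (-ε)) hl0 hl1 (by ring)
    simp only [smul_eq_mul] at hconv
    have harg : lam * ε + (1 - lam) * (-ε) = -y := by
      rw [hlam]; field_simp; ring
    rw [harg] at hconv
    have hB : dpB ε ≤ 0 := dpB_nonpos ε hε
    have h2 := mul_le_mul_of_nonpos_left hconv hB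
    have heq : dpA ε + dpB ε * (lam * Real.exp ε + (1 - lam) * Real.exp (-ε)) = y := by
      rw [hlam]
      unfold dpA dpB
      field_simp
      ring
    linarith

lemma rnDeriv_le_const {X : Type*} [MeasurableSpace X] (μ ν : Measure X)
    [IsFiniteMeasure μ] [IsFiniteMeasure ν] (c : ENNReal)
    (h : ∀ s : Set X, MeasurableSet s → μ s ≤ c * ν s) :
    μ.rnDeriv ν ≤ᵐ[ν] fun _ => c := by
  refine ae_le_of_forall_setLIntegral_le_of_sigmaFinite (μ.measurable_rnDeriv ν)
    (fun s hs _ => ?_)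
  calc ∫⁻ x in s, μ.rnDeriv ν x ∂ν ≤ μ s := Measure.setLIntegral_rnDeriv_le s
  _ ≤ c * ν s := h s hs
  _ = ∫⁻ _ in s, c ∂ν := by rw [setLIntegral_const, mul_comm]

/-- If `μ` and `ν` satisfy the two-sided `ε`-DP inequality, then the
Kullback–Leibler divergence `KL(μ‖ν) = ∫ log(dμ/dν) dμ` is at most `ε²/2`. -/
theorem dp_implies_kl_le {X : Type*} [MeasurableSpace X]
    (μ ν : Measure X) [IsProbabilityMeasure μ] [IsProbabilityMeasure ν]
    (ε : ℝ) (hε : 0 ≤ ε)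
    (h1 : ∀ O : Set X, MeasurableSet O → μ O ≤ ENNReal.ofReal (Real.exp ε) * ν O)
    (h2 : ∀ O : Set X, MeasurableSet O → ν O ≤ ENNReal.ofReal (Real.exp ε) * μ O) :
    ∫ x, Real.log ((μ.rnDeriv ν x).toReal) ∂μ ≤ ε ^ 2 / 2 := by
  have hμν : μ ≪ ν := by
    refine Measure.AbsolutelyContinuous.mk fun s hs hνs => ?_
    have := h1 s hs
    rw [hνs, mul_zero] at this
    exact le_antisymm this (zero_le)
  have hνμ : ν ≪ μ := by
    refine Measure.AbsolutelyContinuous.mk fun s hs hμs => ?_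
    have := h2 s hs
    rw [hμs, mul_zero] at this
    exact le_antisymm this (zero_le)
  have hub : μ.rnDeriv ν ≤ᵐ[ν] fun _ => ENNReal.ofReal (Real.exp ε) :=
    rnDeriv_le_const μ ν _ h1
  have hub' : ∀ᵐ x ∂μ, μ.rnDeriv ν x ≤ ENNReal.ofReal (Real.exp ε) := hμν.ae_le hub
  have hub2 : ∀ᵐ x ∂μ, ν.rnDeriv μ x ≤ ENNReal.ofReal (Real.exp ε) :=
    rnDeriv_le_const ν μ _ h2
  have hpos : ∀ᵐ x ∂μ, 0 < μ.rnDeriv ν x := Measure.rnDeriv_pos hμν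
  have hlt : ∀ᵐ x ∂μ, μ.rnDeriv ν x < ⊤ := hμν.ae_le (Measure.rnDeriv_lt_top μ ν)
  have hinv : (μ.rnDeriv ν)⁻¹ =ᵐ[μ] ν.rnDeriv μ := Measure.inv_rnDeriv hμν
  -- consolidated real-valued facts
  have haeR : ∀ᵐ x ∂μ, Real.exp (-ε) ≤ (μ.rnDeriv ν x).toReal ∧
      (μ.rnDeriv ν x).toReal ≤ Real.exp ε ∧
      (ν.rnDeriv μ x).toReal = ((μ.rnDeriv ν x).toReal)⁻¹ := by
    filter_upwards [hub', hub2, hpos, hlt, hinv] with x h1x h2x h3x h4x h5x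
    have hRpos : 0 < (μ.rnDeriv ν x).toReal := ENNReal.toReal_pos h3x.ne' h4x.ne
    have hRle : (μ.rnDeriv ν x).toReal ≤ Real.exp ε := by
      have := (ENNReal.toReal_le_toReal h4x.ne ENNReal.ofReal_ne_top).mpr h1x
      rwa [ENNReal.toReal_ofReal (Real.exp_pos ε).le] at this
    have hs : (ν.rnDeriv μ x).toReal = ((μ.rnDeriv ν x).toReal)⁻¹ := by
      rw [← h5x, Pi.inv_apply, ENNReal.toReal_inv]
    refine ⟨?_, hRle, hs⟩
    have hfin : (ν.rnDeriv μ x) ≠ ⊤ := by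
      rw [← h5x, Pi.inv_apply]
      exact ENNReal.inv_ne_top.mpr h3x.ne'
    have hsle : ((μ.rnDeriv ν x).toReal)⁻¹ ≤ Real.exp ε := by
      rw [← hs]
      have := (ENNReal.toReal_le_toReal hfin ENNReal.ofReal_ne_top).mpr h2x
      rwa [ENNReal.toReal_ofReal (Real.exp_pos ε).le] at this
    rw [Real.exp_neg]
    have h1R : 1 ≤ Real.exp ε * (μ.rnDeriv ν x).toReal := by
      have := mul_le_mul_of_nonneg_right hsle hRpos.le
      rwa [inv_mul_cancel₀ hRpos.ne'] at this
    rw [inv_le_iff_one_le_mul₀ (Real.exp_pos ε)] at *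
    nlinarith [Real.exp_pos ε]
  have hmeas : Measurable fun x => Real.log ((μ.rnDeriv ν x).toReal) :=
    Real.measurable_log.comp (μ.measurable_rnDeriv ν).ennreal_toReal
  have hlog : ∀ᵐ x ∂μ, -ε ≤ Real.log ((μ.rnDeriv ν x).toReal) ∧
      Real.log ((μ.rnDeriv ν x).toReal) ≤ ε := by
    filter_upwards [haeR] with x ⟨hx1, hx2, _⟩
    have hRpos : 0 < (μ.rnDeriv ν x).toReal := lt_of_lt_of_le (Real.exp_pos _) hx1
    constructor
    · rw [← Real.log_exp (-ε)]
      exact Real.log_le_log (Real.exp_pos _) hx1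
    · rw [← Real.log_exp ε]
      exact Real.log_le_log hRpos hx2
  have hint1 : Integrable (fun x => Real.log ((μ.rnDeriv ν x).toReal)) μ := by
    refine Integrable.mono' (integrable_const ε) hmeas.aestronglyMeasurable ?_
    filter_upwards [hlog] with x ⟨hx1, hx2⟩
    rw [Real.norm_eq_abs, abs_le]
    exact ⟨hx1, hx2⟩
  have hints : Integrable (fun x => (ν.rnDeriv μ x).toReal) μ :=
    Measure.integrable_toReal_rnDeriv
  have hint2 : Integrable (fun x => dpA ε + dpB ε * (ν.rnDeriv μ x).toReal) μ :=
    (integrable_const _).add (hints.const_mul _)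
  have hae : ∀ᵐ x ∂μ, Real.log ((μ.rnDeriv ν x).toReal) ≤
      dpA ε + dpB ε * (ν.rnDeriv μ x).toReal := by
    filter_upwards [haeR, hlog] with x ⟨hx1, hx2, hx3⟩ ⟨hy1, hy2⟩
    have hRpos : 0 < (μ.rnDeriv ν x).toReal := lt_of_lt_of_le (Real.exp_pos _) hx1
    have hkey := key_pt ε (Real.log ((μ.rnDeriv ν x).toReal)) hy1 hy2
    have hexp : Real.exp (-(Real.log ((μ.rnDeriv ν x).toReal))) =
        ((μ.rnDeriv ν x).toReal)⁻¹ := by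
      rw [Real.exp_neg, Real.exp_log hRpos]
    rw [hexp] at hkey
    rw [hx3]
    exact hkey
  calc ∫ x, Real.log ((μ.rnDeriv ν x).toReal) ∂μ
      ≤ ∫ x, (dpA ε + dpB ε * (ν.rnDeriv μ x).toReal) ∂μ :=
        integral_mono_ae hint1 hint2 hae
    _ = dpA ε + dpB ε * ∫ x, (ν.rnDeriv μ x).toReal ∂μ := by
        rw [integral_add (integrable_const _) (hints.const_mul _), integral_const,
          integral_const_mul, probReal_univ]
        simp
    _ = dpA ε + dpB ε := by
        rw [Measure.integral_toReal_rnDeriv hνμ, probReal_univ]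
        simp
    _ ≤ ε ^ 2 / 2 := dpAB_le ε hε
end

section
/- Let σ > 0 and m₁, m₂ ∈ ℝ. Then for every real α > 1, the α-Rényi divergence between the real Gaussian measures with means m₁ and m₂ and common variance σ² satisfies D_α(N(m₁, σ²) ‖ N(m₂, σ²)) = α·(m₁ − m₂)²/(2σ²); equivalently, ∫ (dN(m₁,σ²)/dN(m₂,σ²))^α dN(m₂,σ²) = exp(α(α−1)(m₁ − m₂)²/(2σ²)). -/
open MeasureTheory ProbabilityTheory
open Real

/-- Rényi divergence between two real Gaussians with the same variance `σ²`:
`D_α(N(m₁, σ²) ‖ N(m₂, σ²)) = α·(m₁ − m₂)²/(2σ²)`, equivalently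
`∫ (dN(m₁,σ²)/dN(m₂,σ²))^α dN(m₂,σ²) = exp(α(α−1)(m₁ − m₂)²/(2σ²))`. -/
theorem renyiDiv_gaussian (σ : ℝ) (hσ : 0 < σ) (m₁ m₂ : ℝ) :
    ∀ α : ℝ, 1 < α →
      renyiDiv (gaussianReal m₁ ⟨σ ^ 2, sq_nonneg σ⟩) (gaussianReal m₂ ⟨σ ^ 2, sq_nonneg σ⟩) α
          = α * (m₁ - m₂) ^ 2 / (2 * σ ^ 2) ∧
      ∫ x, ((gaussianReal m₁ ⟨σ ^ 2, sq_nonneg σ⟩).rnDeriv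
              (gaussianReal m₂ ⟨σ ^ 2, sq_nonneg σ⟩) x).toReal ^ α
          ∂(gaussianReal m₂ ⟨σ ^ 2, sq_nonneg σ⟩)
        = Real.exp (α * (α - 1) * (m₁ - m₂) ^ 2 / (2 * σ ^ 2)) := by
  intro α hα
  set v : NNReal := ⟨σ ^ 2, sq_nonneg σ⟩ with hv
  have hv0 : v ≠ 0 := by
    intro h
    exact pow_ne_zero 2 hσ.ne' (congrArg NNReal.toReal h)
  have hvR : (v : ℝ) = σ ^ 2 := rfl
  have hvpos : (0 : ℝ) < v := by rw [hvR]; positivity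
  set g : ℝ → ENNReal := fun x =>
    ENNReal.ofReal (gaussianPDFReal m₁ v x / gaussianPDFReal m₂ v x) with hg
  have hgmeas : Measurable g :=
    ((measurable_gaussianPDFReal m₁ v).div (measurable_gaussianPDFReal m₂ v)).ennreal_ofReal
  have hμ₁ : gaussianReal m₁ v = (gaussianReal m₂ v).withDensity g := by
    rw [gaussianReal_of_var_ne_zero _ hv0, gaussianReal_of_var_ne_zero _ hv0,
      ← withDensity_mul _ (measurable_gaussianPDF m₂ v) hgmeas]
    congr 1
    ext x
    have h2 : 0 < gaussianPDFReal m₂ v x := gaussianPDFReal_pos _ _ _ hv0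
    simp only [gaussianPDF, Pi.mul_apply, hg]
    rw [← ENNReal.ofReal_mul h2.le, mul_div_cancel₀ _ h2.ne']
  have hrn : (gaussianReal m₁ v).rnDeriv (gaussianReal m₂ v) =ᵐ[gaussianReal m₂ v] g := by
    rw [hμ₁]
    exact Measure.rnDeriv_withDensity _ hgmeas
  -- pointwise identity
  have key : ∀ x : ℝ,
      (gaussianPDFReal m₂ v x).toNNReal •
        ((g x).toReal ^ α)
      = Real.exp (α * (α - 1) * (m₁ - m₂) ^ 2 / (2 * σ ^ 2)) *
          gaussianPDFReal (m₂ + α * (m₁ - m₂)) v x := by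
    intro x
    have h1 : 0 < gaussianPDFReal m₁ v x := gaussianPDFReal_pos _ _ _ hv0
    have h2 : 0 < gaussianPDFReal m₂ v x := gaussianPDFReal_pos _ _ _ hv0
    have hs : (0 : ℝ) < (√(2 * π * v))⁻¹ := by
      have : (0:ℝ) < 2 * π * v := by positivity
      positivity
    rw [hg]
    simp only [NNReal.smul_def, Real.coe_toNNReal _ h2.le, smul_eq_mul,
      ENNReal.toReal_ofReal (div_nonneg h1.le h2.le)]
    simp only [gaussianPDFReal]
    rw [mul_div_mul_left _ _ hs.ne', ← Real.exp_sub, ← Real.exp_mul,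
      ← mul_assoc, mul_comm _ ((√(2 * π * (v:ℝ)))⁻¹), mul_assoc, ← Real.exp_add,
      mul_assoc ((√(2 * π * (v:ℝ)))⁻¹), ← Real.exp_add]
    congr 2
    rw [hvR]
    have h2σ : (2 : ℝ) * σ ^ 2 ≠ 0 := by positivity
    field_simp
    ring
  have hint : (∫ x, ((gaussianReal m₁ v).rnDeriv (gaussianReal m₂ v) x).toReal ^ α
      ∂(gaussianReal m₂ v))
      = Real.exp (α * (α - 1) * (m₁ - m₂) ^ 2 / (2 * σ ^ 2)) := by
    rw [integral_congr_ae (hrn.mono fun x hx => by rw [hx])]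
    rw [gaussianReal_of_var_ne_zero _ hv0]
    have : (volume.withDensity (gaussianPDF m₂ v))
        = volume.withDensity (fun x => ((fun x => (gaussianPDFReal m₂ v x).toNNReal) x : ENNReal)) := by
      rfl
    rw [this, integral_withDensity_eq_integral_smul
      ((measurable_gaussianPDFReal m₂ v).real_toNNReal) (fun x => (g x).toReal ^ α)]
    simp_rw [key]
    rw [integral_const_mul, integral_gaussianPDFReal_eq_one _ hv0, mul_one]
  refine ⟨?_, hint⟩
  rw [renyiDiv, hint, Real.log_exp]
  have hα1 : α - 1 ≠ 0 := sub_ne_zero.mpr hα.ne'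
  field_simp
end
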